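/- Let a > 0, b > 0, c ≥ 0 be real with b² > 4ac, and let r₋ < r₊ be the two roots of a r² − b r + c = 0 (both nonnegative, r₊ > 0). Then ∫_{r₋}^{r₊} √(−a r² + b r − c) / r dr = π ( b/(2√a) − √c ). In particular, with a = 2m|E|, b = 2m e² Z, c = p_φ², this yields the Sommerfeld radial action identity ∮ p_r dr = 2π( √(m e⁴ Z²/(2|E|)) − |p_φ| ) for the Kepler problem with energy E < 0 and angular momentum p_φ. -/

import Mathlib

open intervalIntegral
set_option maxHeartbeats 1000000

open Set

private lemma sqrt_eq_of_sq {x y : ℝ} (hy : 0 ≤ y) (h : x = y ^ 2) : Real.sqrt x = y := by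
  rw [h]; exact Real.sqrt_sq hy

private lemma arcsin_hasDerivAt_comp {f : ℝ → ℝ} {f' x : ℝ} (hf : HasDerivAt f f' x)
    (h2 : (f x) ^ 2 < 1) :
    HasDerivAt (fun y => Real.arcsin (f y)) (1 / Real.sqrt (1 - f x ^ 2) * f') x := by
  have habs : |f x| < 1 := (sq_lt_one_iff_abs_lt_one _).1 h2
  have h1 := abs_lt.1 habs
  exact (Real.hasDerivAt_arcsin (by linarith) (by linarith)).comp x hf

private lemma aux_pos (a b c : ℝ) (ha : 0 < a) (hb : 0 < b) (hc : 0 < c)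
    (hdisc : b ^ 2 > 4 * a * c)
    (rm rp : ℝ) (hlt : rm < rp)
    (hrm : a * rm ^ 2 - b * rm + c = 0)
    (hrp : a * rp ^ 2 - b * rp + c = 0) :
    ∫ r in rm..rp, Real.sqrt (-a * r ^ 2 + b * r - c) / r
      = Real.pi * (b / (2 * Real.sqrt a) - Real.sqrt c) := by
  have hrm0 : 0 < rm := by nlinarith
  have hrp0 : 0 < rp := lt_trans hrm0 hlt
  have hsum : a * (rm + rp) = b := by
    have key : (rm - rp) * (a * (rm + rp) - b) = 0 := by linear_combination hrm - hrp
    rcases mul_eq_zero.1 key with h | h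
    · exfalso; linarith
    · linarith
  have hprod : a * (rm * rp) = c := by linear_combination rm * hsum - hrm
  have hDpos : (0:ℝ) < b ^ 2 - 4 * a * c := by linarith
  set sD := Real.sqrt (b ^ 2 - 4 * a * c) with hsDdef
  have hsDpos : 0 < sD := Real.sqrt_pos.2 hDpos
  have hsD2 : sD ^ 2 = b ^ 2 - 4 * a * c := Real.sq_sqrt hDpos.le
  have hrpD : 2 * a * rp - b = sD := by
    symm; apply sqrt_eq_of_sq (by nlinarith) (by linear_combination (-4*a) * hrp)
  have hrmD : 2 * a * rm - b = -sD := by linear_combination 2 * hsum - hrpD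
  set sa := Real.sqrt a with hsadef
  have hsapos : 0 < sa := Real.sqrt_pos.2 ha
  have hsa2 : sa ^ 2 = a := Real.sq_sqrt ha.le
  set sc := Real.sqrt c with hscdef
  have hscpos : 0 < sc := Real.sqrt_pos.2 hc
  have hsc2 : sc ^ 2 = c := Real.sq_sqrt hc.le
  set F : ℝ → ℝ := fun r =>
    Real.sqrt (-a * r ^ 2 + b * r - c) + b / (2 * sa) * Real.arcsin ((2 * a * r - b) / sD)
      - sc * Real.arcsin ((b * r - 2 * c) / (r * sD)) with hFdef
  have hderiv : ∀ x ∈ Ioo rm rp,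
      HasDerivAt F (Real.sqrt (-a * x ^ 2 + b * x - c) / x) x := by
    intro x hx
    have hx0 : 0 < x := lt_trans hrm0 hx.1
    have hQfac : -a * x ^ 2 + b * x - c = a * ((x - rm) * (rp - x)) := by
      linear_combination (-x) * hsum + hprod
    have hQ : 0 < -a * x ^ 2 + b * x - c := by
      rw [hQfac]
      exact mul_pos ha (mul_pos (by linarith [hx.1]) (by linarith [hx.2]))
    set sQ := Real.sqrt (-a * x ^ 2 + b * x - c) with hsQdef
    have hsQpos : 0 < sQ := Real.sqrt_pos.2 hQ
    have hsQ2 : sQ ^ 2 = -a * x ^ 2 + b * x - c := Real.sq_sqrt hQ.le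
    -- term 1
    have h1 : HasDerivAt (fun r : ℝ => -a * r ^ 2 + b * r - c) (b - 2 * a * x) x := by
      have := (((hasDerivAt_pow 2 x).const_mul (-a)).add ((hasDerivAt_id x).const_mul b)).sub_const c
      exact this.congr_deriv (by ring)
    have hT1 := h1.sqrt hQ.ne'
    -- term 2
    have h2in : HasDerivAt (fun r : ℝ => (2 * a * r - b) / sD) (2 * a / sD) x := by
      have := (((hasDerivAt_id x).const_mul (2 * a)).sub_const b).div_const sD
      exact this.congr_deriv (by ring)
    have hlt2 : (2 * a * x - b) ^ 2 < b ^ 2 - 4 * a * c := by nlinarith [hQ]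
    have hu2 : ((2 * a * x - b) / sD) ^ 2 < 1 := by
      rw [div_pow, hsD2, div_lt_one hDpos]; exact hlt2
    have hT2 := arcsin_hasDerivAt_comp h2in hu2
    -- term 3
    have hnum : HasDerivAt (fun r : ℝ => b * r - 2 * c) b x := by
      have := ((hasDerivAt_id x).const_mul b).sub_const (2 * c)
      exact this.congr_deriv (by ring)
    have hden : HasDerivAt (fun r : ℝ => r * sD) sD x := by
      have := (hasDerivAt_id x).mul_const sD
      exact this.congr_deriv (by ring)
    have hdenne : x * sD ≠ 0 := (mul_pos hx0 hsDpos).ne'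
    have h3in := hnum.div hden hdenne
    have hlt3 : (b * x - 2 * c) ^ 2 < x ^ 2 * (b ^ 2 - 4 * a * c) := by
      nlinarith [mul_pos hc hQ]
    have hu3 : ((b * x - 2 * c) / (x * sD)) ^ 2 < 1 := by
      rw [div_pow, mul_pow, hsD2, div_lt_one (by positivity)]; exact hlt3
    have hT3 := arcsin_hasDerivAt_comp h3in hu3
    have hall := (hT1.add (hT2.const_mul (b / (2 * sa)))).sub (hT3.const_mul sc)
    refine hall.congr_deriv ?_; symm
    -- value equality
    have e2 : Real.sqrt (1 - ((2 * a * x - b) / sD) ^ 2)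
        = 2 * sa * Real.sqrt (-a * x ^ 2 + b * x - c) / sD := by
      apply sqrt_eq_of_sq (by positivity)
      field_simp
      rw [show x * (-(a * x) + b) - c = -a * x ^ 2 + b * x - c by ring, ← hsQdef]
      linear_combination hsD2 - 4 * sQ ^ 2 * hsa2 - 4 * a * hsQ2
    have e3 : Real.sqrt (1 - ((b * x - 2 * c) / (x * sD)) ^ 2)
        = 2 * sc * Real.sqrt (-a * x ^ 2 + b * x - c) / (x * sD) := by
      apply sqrt_eq_of_sq (by positivity)
      field_simp
      rw [show x * (-(x * a) + b) - c = -a * x ^ 2 + b * x - c by ring, ← hsQdef]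
      linear_combination x ^ 2 * hsD2 - 4 * sQ ^ 2 * hsc2 - 4 * c * hsQ2
    simp only [Pi.div_apply]
    rw [e2, e3, ← hsQdef]
    field_simp
    linear_combination (b*x)*hsa2 + (2*sa^2)*hsQ2
  have hint : IntervalIntegrable (fun r => Real.sqrt (-a * r ^ 2 + b * r - c) / r)
      MeasureTheory.volume rm rp := by
    apply ContinuousOn.intervalIntegrable
    apply ContinuousOn.div
    · exact (Real.continuous_sqrt.comp (by fun_prop)).continuousOn
    · exact continuous_id.continuousOn
    · intro y hy
      rw [uIcc_of_le hlt.le] at hy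
      exact ne_of_gt (lt_of_lt_of_le hrm0 hy.1)
  have hcF : ∀ y : ℝ, 0 < y → ContinuousAt F y := by
    intro y hy
    apply ContinuousAt.sub
    · apply ContinuousAt.add
      · exact (Real.continuous_sqrt.continuousAt).comp (by fun_prop)
      · exact continuousAt_const.mul ((Real.continuous_arcsin.continuousAt).comp (by fun_prop))
    · apply continuousAt_const.mul
      apply (Real.continuous_arcsin.continuousAt).comp
      exact ContinuousAt.div (by fun_prop) (by fun_prop) (mul_pos hy hsDpos).ne'
  have key := integral_eq_sub_of_hasDerivAt_of_tendsto hlt hderiv hint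
    ((hcF rm hrm0).continuousWithinAt) ((hcF rp hrp0).continuousWithinAt)
  rw [key]
  have hm1 : (2 * a * rm - b) / sD = -1 := by rw [hrmD]; field_simp
  have hp1 : (2 * a * rp - b) / sD = 1 := by rw [hrpD]; field_simp
  have hm2 : (b * rm - 2 * c) / (rm * sD) = -1 := by
    rw [show b * rm - 2 * c = -(rm * sD) by linear_combination (-2) * hrm + rm * hrmD]
    rw [neg_div, div_self (mul_pos hrm0 hsDpos).ne']
  have hp2 : (b * rp - 2 * c) / (rp * sD) = 1 := by
    rw [show b * rp - 2 * c = rp * sD by linear_combination (-2) * hrp + rp * hrpD]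
    exact div_self (mul_pos hrp0 hsDpos).ne'
  have hqm : -a * rm ^ 2 + b * rm - c = 0 := by linarith
  have hqp : -a * rp ^ 2 + b * rp - c = 0 := by linarith
  simp only [hFdef]
  rw [hqm, hqp, hm1, hp1, hm2, hp2, Real.sqrt_zero, Real.arcsin_one, Real.arcsin_neg_one]
  ring

private lemma aux_zero (a b : ℝ) (ha : 0 < a) (hb : 0 < b) :
    ∫ r in (0:ℝ)..(b/a), Real.sqrt (-a * r ^ 2 + b * r - 0) / r
      = Real.pi * (b / (2 * Real.sqrt a) - Real.sqrt 0) := by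
  set sa := Real.sqrt a with hsadef
  have hsapos : 0 < sa := Real.sqrt_pos.2 ha
  have hsa2 : sa ^ 2 = a := Real.sq_sqrt ha.le
  have hrp0 : 0 < b / a := div_pos hb ha
  set F : ℝ → ℝ := fun r =>
    Real.sqrt (-a * r ^ 2 + b * r - 0)
      + b / (2 * sa) * Real.arcsin ((2 * a * r - b) / b) with hFdef
  have hderiv : ∀ x ∈ Ioo (0:ℝ) (b/a),
      HasDerivAt F (Real.sqrt (-a * x ^ 2 + b * x - 0) / x) x := by
    intro x hx
    have hx0 : 0 < x := hx.1
    have hxb : a * x < b := by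
      have := (lt_div_iff₀ ha).1 hx.2; linarith
    have hQ : 0 < -a * x ^ 2 + b * x - 0 := by nlinarith
    set sQ := Real.sqrt (-a * x ^ 2 + b * x - 0) with hsQdef
    have hsQpos : 0 < sQ := Real.sqrt_pos.2 hQ
    have hsQ2 : sQ ^ 2 = -a * x ^ 2 + b * x - 0 := Real.sq_sqrt hQ.le
    have h1 : HasDerivAt (fun r : ℝ => -a * r ^ 2 + b * r - 0) (b - 2 * a * x) x := by
      have := (((hasDerivAt_pow 2 x).const_mul (-a)).add
        ((hasDerivAt_id x).const_mul b)).sub_const 0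
      exact this.congr_deriv (by ring)
    have hT1 := h1.sqrt hQ.ne'
    have h2in : HasDerivAt (fun r : ℝ => (2 * a * r - b) / b) (2 * a / b) x := by
      have := (((hasDerivAt_id x).const_mul (2 * a)).sub_const b).div_const b
      exact this.congr_deriv (by ring)
    have hlt2 : (2 * a * x - b) ^ 2 < b ^ 2 := by nlinarith
    have hu2 : ((2 * a * x - b) / b) ^ 2 < 1 := by
      rw [div_pow, div_lt_one (by positivity)]; exact hlt2
    have hT2 := arcsin_hasDerivAt_comp h2in hu2
    have hall := hT1.add (hT2.const_mul (b / (2 * sa)))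
    refine hall.congr_deriv ?_; symm
    have e2 : Real.sqrt (1 - ((2 * a * x - b) / b) ^ 2) = 2 * sa * sQ / b := by
      apply sqrt_eq_of_sq (by positivity)
      field_simp
      linear_combination (-4*(-a*x^2+b*x-0))*hsa2 - 4*sa^2*hsQ2
    rw [e2, ← hsQdef]
    field_simp
    linear_combination (b*x)*hsa2 + (2*sa^2)*hsQ2
  have hint : IntervalIntegrable (fun r => Real.sqrt (-a * r ^ 2 + b * r - 0) / r)
      MeasureTheory.volume 0 (b/a) := by
    have hg : IntervalIntegrable (fun r : ℝ => Real.sqrt b * r ^ (-(1/2) : ℝ))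
        MeasureTheory.volume 0 (b/a) :=
      (intervalIntegral.intervalIntegrable_rpow' (by norm_num)).const_mul _
    apply hg.mono_fun'
    · apply Measurable.aestronglyMeasurable
      exact (Real.continuous_sqrt.measurable.comp (by fun_prop)).div measurable_id
    · rw [Filter.EventuallyLE, MeasureTheory.ae_restrict_iff' measurableSet_uIoc]
      apply Filter.Eventually.of_forall
      intro x hx
      rw [uIoc_of_le hrp0.le] at hx
      have hx0 : 0 < x := hx.1
      have hsx : 0 < Real.sqrt x := Real.sqrt_pos.2 hx0
      have hxx : Real.sqrt x * Real.sqrt x = x := Real.mul_self_sqrt hx0.le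
      have h1 : Real.sqrt (-a * x ^ 2 + b * x - 0) ≤ Real.sqrt b * Real.sqrt x := by
        rw [← Real.sqrt_mul hb.le]
        exact Real.sqrt_le_sqrt (by nlinarith)
      have h2 : x ^ (-(1/2) : ℝ) = (Real.sqrt x)⁻¹ := by
        rw [Real.rpow_neg hx0.le, ← Real.sqrt_eq_rpow]
      rw [Real.norm_of_nonneg (by positivity), h2, div_le_iff₀ hx0]
      calc Real.sqrt (-a * x ^ 2 + b * x - 0) ≤ Real.sqrt b * Real.sqrt x := h1
        _ = Real.sqrt b * (Real.sqrt x)⁻¹ * x := by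
            have hh : (Real.sqrt x)⁻¹ * x = Real.sqrt x := by
              rw [inv_mul_eq_div, div_eq_iff hsx.ne']; exact hxx.symm
            rw [mul_assoc, hh]
  have hcF : ∀ y : ℝ, ContinuousAt F y := by
    intro y
    apply ContinuousAt.add
    · exact (Real.continuous_sqrt.continuousAt).comp (by fun_prop)
    · exact continuousAt_const.mul ((Real.continuous_arcsin.continuousAt).comp (by fun_prop))
  have key := integral_eq_sub_of_hasDerivAt_of_tendsto hrp0 hderiv hint
    ((hcF 0).continuousWithinAt) ((hcF (b/a)).continuousWithinAt)
  rw [key]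
  have hm1 : (2 * a * (0:ℝ) - b) / b = -1 := by
    rw [show 2 * a * (0:ℝ) - b = -b by ring, neg_div, div_self hb.ne']
  have hp1 : (2 * a * (b/a) - b) / b = 1 := by
    rw [show 2 * a * (b/a) - b = b by field_simp; ring, div_self hb.ne']
  have hq0 : -a * (0:ℝ) ^ 2 + b * 0 - 0 = 0 := by ring
  have hqp : -a * (b/a) ^ 2 + b * (b/a) - 0 = 0 := by field_simp; ring
  simp only [hFdef]
  rw [hq0, hqp, hm1, hp1, Real.sqrt_zero, Real.arcsin_one, Real.arcsin_neg_one]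
  ring

/-- **The Sommerfeld radial action integral.**
If `r₋ < r₊` are the two roots of `a r² − b r + c = 0` (with `a, b > 0`,
`c ≥ 0`, `b² > 4ac`), then
`∫_{r₋}^{r₊} √(−a r² + b r − c)/r dr = π (b/(2√a) − √c)`. -/
theorem sommerfeld_radial_action_integral
    (a b c : ℝ) (ha : 0 < a) (hb : 0 < b) (hc : 0 ≤ c)
    (hdisc : b ^ 2 > 4 * a * c)
    (rm rp : ℝ) (hlt : rm < rp)
    (hrm : a * rm ^ 2 - b * rm + c = 0)
    (hrp : a * rp ^ 2 - b * rp + c = 0) :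
    ∫ r in rm..rp, Real.sqrt (-a * r ^ 2 + b * r - c) / r
      = Real.pi * (b / (2 * Real.sqrt a) - Real.sqrt c) := by
  rcases eq_or_lt_of_le hc with hc0 | hcpos
  · subst hc0
    have hrm' : rm * (a * rm - b) = 0 := by linear_combination hrm
    have hrp' : rp * (a * rp - b) = 0 := by linear_combination hrp
    have hba : 0 < b / a := div_pos hb ha
    have hkey : rm = 0 ∧ rp = b / a := by
      rcases mul_eq_zero.1 hrm' with h1 | h1 <;> rcases mul_eq_zero.1 hrp' with h2 | h2
      · exfalso; rw [h1, h2] at hlt; exact lt_irrefl 0 hlt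
      · exact ⟨h1, by field_simp at h2 ⊢; linarith⟩
      · exfalso
        have hrmv : rm = b / a := by field_simp; linarith
        rw [hrmv, h2] at hlt; linarith
      · exfalso
        have : a * (rm - rp) = 0 := by linarith
        have := mul_eq_zero.1 this
        rcases this with h | h
        · linarith
        · linarith
    obtain ⟨h1, h2⟩ := hkey
    subst h1; subst h2
    exact aux_zero a b ha hb
  · exact aux_pos a b c ha hb hcpos hdisc rm rp hlt hrm hrp
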